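/- Every finite poset P whose Hasse diagram is a tree is an induced subposet of some finite saturated poset P̃ of the same height whose Hasse diagram is also a tree. -/

import Mathlib

/-- A finite poset (here: the type `α`) has height `h` if `h` is the maximum number of
elements of a chain in `α`. -/
def HasHeight (α : Type*) [Preorder α] (h : ℕ) : Prop :=
  (∃ c : Finset α, IsChain (· ≤ ·) (c : Set α) ∧ c.card = h) ∧
    ∀ c : Finset α, IsChain (· ≤ ·) (c : Set α) → c.card ≤ h

/-- A maximal chain: a chain not properly contained in any other chain. -/
def IsMaxChainF {α : Type*} [Preorder α] (c : Finset α) : Prop :=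
  IsChain (· ≤ ·) (c : Set α) ∧
    ∀ d : Finset α, IsChain (· ≤ ·) (d : Set α) → c ⊆ d → c = d

set_option linter.unusedSectionVars false

namespace Stmt3AuxB
open Finset SimpleGraph

attribute [local instance] Classical.propDecidable

section Graph
variable {V : Type} [Fintype V]

lemma reach_of_del {G : SimpleGraph V} {v w : V}
    (hr : (G \ fromEdgeSet {s(v,w)}).Reachable v w) :
    ∀ {a b : V}, G.Reachable a b → (G \ fromEdgeSet {s(v,w)}).Reachable a b := by
  intro a b hab
  obtain ⟨p⟩ := hab
  induction p with
  | nil => exact Reachable.refl _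
  | @cons a c b hadj q ih =>
    refine Reachable.trans ?_ ih
    by_cases he : s(a, c) = s(v, w)
    · rw [Sym2.eq_iff] at he
      rcases he with ⟨rfl, rfl⟩ | ⟨rfl, rfl⟩
      · exact hr
      · exact hr.symm
    · refine Adj.reachable ?_
      rw [SimpleGraph.sdiff_adj, SimpleGraph.fromEdgeSet_adj]
      exact ⟨hadj, fun hc => he hc.1⟩

lemma edgeSet_del_eq {G : SimpleGraph V} {v w : V} (hadj : G.Adj v w) :
    (G \ fromEdgeSet {s(v,w)}).edgeSet = G.edgeSet \ {s(v,w)} := by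
  rw [edgeSet_sdiff, edgeSet_fromEdgeSet]
  ext e
  simp only [Set.mem_diff, Set.mem_singleton_iff, Set.mem_setOf_eq]
  constructor
  · rintro ⟨he, hne⟩
    refine ⟨he, fun hev => hne ⟨hev, ?_⟩⟩
    subst hev
    simp [Sym2.isDiag_iff_proj_eq, hadj.ne]
  · rintro ⟨he, hne⟩
    exact ⟨he, fun hc => hne hc.1⟩

lemma ncard_edge_eq {G : SimpleGraph V} [Fintype G.edgeSet] :
    G.edgeSet.ncard = G.edgeFinset.card := by
  rw [Set.ncard_eq_toFinset_card', edgeFinset]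

lemma card_le_of_connected : ∀ (n : ℕ) (G : SimpleGraph V), G.edgeSet.ncard ≤ n →
    G.Connected → Fintype.card V ≤ G.edgeSet.ncard + 1 := by
  intro n
  induction n with
  | zero =>
    intro G hn hc
    by_cases hac : G.IsAcyclic
    · have htr : G.IsTree := ⟨hc, hac⟩
      classical
      rw [ncard_edge_eq]
      exact (htr.card_edgeFinset).ge
    · exfalso
      rw [isAcyclic_iff_forall_adj_isBridge] at hac
      push_neg at hac
      obtain ⟨v, w, hadj, -⟩ := hac
      have h1 : s(v,w) ∈ G.edgeSet := hadj
      have : G.edgeSet.ncard ≠ 0 := by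
        intro he
        rw [Set.ncard_eq_zero (Set.toFinite _)] at he
        rw [he] at h1
        exact h1
      omega
  | succ n ih =>
    intro G hn hc
    by_cases hac : G.IsAcyclic
    · have htr : G.IsTree := ⟨hc, hac⟩
      classical
      rw [ncard_edge_eq]
      exact (htr.card_edgeFinset).ge
    · rw [isAcyclic_iff_forall_adj_isBridge] at hac
      push_neg at hac
      obtain ⟨v, w, hadj, hbr⟩ := hac
      rw [SimpleGraph.isBridge_iff] at hbr
      push_neg at hbr
      have hr : (G \ fromEdgeSet {s(v,w)}).Reachable v w := hbr
      set G' := G \ fromEdgeSet {s(v,w)} with hG'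
      have hc' : G'.Connected := by
        have := hc.nonempty
        exact Connected.mk (fun a b => reach_of_del hr (hc.preconnected a b))
      have hE : G'.edgeSet = G.edgeSet \ {s(v,w)} := edgeSet_del_eq hadj
      have hcard : G'.edgeSet.ncard + 1 = G.edgeSet.ncard := by
        rw [hE]
        exact Set.ncard_diff_singleton_add_one hadj (Set.toFinite _)
      have := ih G' (by omega) hc'
      omega

lemma isTree_of_connected_card (G : SimpleGraph V) (hc : G.Connected)
    (hcard : G.edgeSet.ncard + 1 = Fintype.card V) : G.IsTree := by
  by_cases hac : G.IsAcyclic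
  · exact ⟨hc, hac⟩
  · exfalso
    rw [isAcyclic_iff_forall_adj_isBridge] at hac
    push_neg at hac
    obtain ⟨v, w, hadj, hbr⟩ := hac
    rw [SimpleGraph.isBridge_iff] at hbr
    push_neg at hbr
    have hr : (G \ fromEdgeSet {s(v,w)}).Reachable v w := hbr
    set G' := G \ fromEdgeSet {s(v,w)} with hG'
    have hc' : G'.Connected := by
      have := hc.nonempty
      exact Connected.mk (fun a b => reach_of_del hr (hc.preconnected a b))
    have hE : G'.edgeSet = G.edgeSet \ {s(v,w)} := edgeSet_del_eq hadj
    have hcard' : G'.edgeSet.ncard + 1 = G.edgeSet.ncard := by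
      rw [hE]
      exact Set.ncard_diff_singleton_add_one hadj (Set.toFinite _)
    have := card_le_of_connected G'.edgeSet.ncard G' le_rfl hc'
    omega

end Graph

variable {α : Type} [Fintype α] [PartialOrder α]

/-- height of `x`: max card of a chain with top `x`. -/
noncomputable def ht (x : α) : ℕ :=
  (univ.filter fun c : Finset α =>
    IsChain (· ≤ ·) (c : Set α) ∧ x ∈ c ∧ ∀ y ∈ c, y ≤ x).sup Finset.card

lemma singleton_mem_filter (x : α) :
    ({x} : Finset α) ∈ (univ.filter fun c : Finset α =>
      IsChain (· ≤ ·) (c : Set α) ∧ x ∈ c ∧ ∀ y ∈ c, y ≤ x) := by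
  simp only [mem_filter, mem_univ, true_and, coe_singleton, Finset.mem_singleton]
  exact ⟨Set.subsingleton_singleton.isChain, fun y hy => le_of_eq hy⟩

lemma ht_spec (x : α) : ∃ c : Finset α, IsChain (· ≤ ·) (c : Set α) ∧ x ∈ c ∧
    (∀ y ∈ c, y ≤ x) ∧ c.card = ht x := by
  obtain ⟨c, hc, hsup⟩ := Finset.exists_mem_eq_sup _ ⟨{x}, singleton_mem_filter x⟩ Finset.card
  simp only [mem_filter, mem_univ, true_and] at hc
  exact ⟨c, hc.1, hc.2.1, hc.2.2, hsup.symm⟩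

lemma one_le_ht (x : α) : 1 ≤ ht x := by
  have := Finset.le_sup (f := Finset.card) (singleton_mem_filter x)
  rwa [Finset.card_singleton] at this

lemma ht_le {h : ℕ} (hh : HasHeight α h) (x : α) : ht x ≤ h := by
  refine Finset.sup_le fun c hc => ?_
  simp only [mem_filter, mem_univ, true_and] at hc
  exact hh.2 c hc.1

lemma ht_lt {x y : α} (hxy : x < y) : ht x < ht y := by
  obtain ⟨c, hch, hxc, hbd, hcard⟩ := ht_spec x
  have hyc : y ∉ c := fun hyc => absurd (hbd y hyc) (not_le_of_gt hxy)
  have hch' : IsChain (· ≤ ·) ((insert y c : Finset α) : Set α) := by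
    rw [Finset.coe_insert]
    exact hch.insert fun b hb _ => Or.inr ((hbd b hb).trans hxy.le)
  have hmem : (insert y c : Finset α) ∈ (univ.filter fun c : Finset α =>
      IsChain (· ≤ ·) (c : Set α) ∧ y ∈ c ∧ ∀ z ∈ c, z ≤ y) := by
    simp only [mem_filter, mem_univ, true_and]
    refine ⟨hch', Finset.mem_insert_self _ _, fun z hz => ?_⟩
    rcases Finset.mem_insert.mp hz with rfl | hz
    · exact le_rfl
    · exact (hbd z hz).trans hxy.le
  have := Finset.le_sup (f := Finset.card) hmem
  rw [Finset.card_insert_of_notMem hyc, hcard] at this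
  exact lt_of_lt_of_le (Nat.lt_succ_self _) this

lemma ht_min {x : α} (hx : IsMin x) : ht x = 1 := by
  refine le_antisymm (Finset.sup_le fun c hc => ?_) (one_le_ht x)
  simp only [mem_filter, mem_univ, true_and] at hc
  refine Finset.card_le_one.mpr (fun a ha b hb => ?_) |>.trans le_rfl
  have ha' := le_antisymm (hc.2.2 a ha) (hx (hc.2.2 a ha))
  have hb' := le_antisymm (hc.2.2 b hb) (hx (hc.2.2 b hb))
  rw [ha', hb']

/-- membership predicate for the big poset -/
def Mem (h : ℕ) (x : α) (i : ℕ) : Prop :=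
  i ≤ h ∧ (i = ht x ∨ (i < ht x ∧ ∃ q, q ⋖ x ∧ ht q < i) ∨ (ht x < i ∧ IsMax x))

/-- the saturated poset -/
def B (α : Type) [Fintype α] [PartialOrder α] (h : ℕ) : Type :=
  {p : α × ℕ // Mem h p.1 p.2}

variable {h : ℕ}

noncomputable instance : Fintype (B α h) :=
  Fintype.ofInjective (fun a : B α h => ((a.1.1, ⟨a.1.2, Nat.lt_succ_of_le a.2.1⟩) : α × Fin (h+1)))
    (by rintro ⟨⟨x, i⟩, hx⟩ ⟨⟨y, j⟩, hy⟩ hxy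
        simp only [Prod.mk.injEq, Fin.mk.injEq] at hxy
        exact Subtype.ext (Prod.ext hxy.1 hxy.2))

def lv (a : B α h) : ℕ := a.1.2
def pj (a : B α h) : α := a.1.1

lemma memB (a : B α h) : Mem h (pj a) (lv a) := a.2

lemma lv_bounds (a : B α h) : 1 ≤ lv a ∧ lv a ≤ h := by
  obtain ⟨hle, hc⟩ := a.2
  refine ⟨?_, hle⟩
  have h1 : lv a = (Subtype.val a).2 := rfl
  rcases hc with he | ⟨-, q, -, hq⟩ | ⟨hlt, -⟩
  · rw [h1, he]; exact one_le_ht _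
  · rw [h1]; exact le_trans (one_le_ht q) hq.le
  · rw [h1]; exact le_trans (one_le_ht _) hlt.le

lemma up_mem (hh : HasHeight α h) {x : α} {i : ℕ} (hm : Mem h x i) (hi : i < ht x) :
    Mem h x (i + 1) := by
  have hxh := ht_le hh x
  refine ⟨by omega, ?_⟩
  rcases hm.2 with he | ⟨-, q, hq, hqi⟩ | ⟨hlt, -⟩
  · exact absurd he (by omega)
  · rcases eq_or_lt_of_le (Nat.succ_le_of_lt hi) with he | hlt
    · exact Or.inl he
    · exact Or.inr (Or.inl ⟨hlt, q, hq, by omega⟩)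
  · exact absurd hlt (by omega)

lemma down_mem {x : α} {i : ℕ} (hm : Mem h x (i + 1)) (hi : ht x ≤ i) : Mem h x i := by
  have h1 := hm.1
  refine ⟨by omega, ?_⟩
  rcases hm.2 with he | ⟨hlt, -⟩ | ⟨-, hmax⟩
  · exact absurd he (by omega)
  · exact absurd hlt (by omega)
  · rcases eq_or_lt_of_le hi with he | hlt
    · exact Or.inl he.symm
    · exact Or.inr (Or.inr ⟨hlt, hmax⟩)

lemma cross_mem (hh : HasHeight α h) {x y : α} (hxy : x ⋖ y) : Mem h y (ht x + 1) := by
  have hlt : ht x < ht y := ht_lt hxy.lt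
  refine ⟨le_trans hlt (ht_le hh y), ?_⟩
  rcases eq_or_lt_of_le (Nat.succ_le_of_lt hlt) with he | hlt'
  · exact Or.inl he
  · exact Or.inr (Or.inl ⟨hlt', x, hxy, Nat.lt_succ_self _⟩)

lemma f_mem (hh : HasHeight α h) (x : α) : Mem h x (ht x) := ⟨ht_le hh x, Or.inl rfl⟩

/-- the step (covering) relation on `B` -/
def Step (a b : B α h) : Prop :=
  lv b = lv a + 1 ∧ (pj b = pj a ∨ (pj a ⋖ pj b ∧ lv a = ht (pj a)))

lemma Step.pj_le {a b : B α h} (hs : Step a b) : pj a ≤ pj b := by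
  rcases hs.2 with he | ⟨hc, -⟩
  · exact le_of_eq he.symm
  · exact hc.le

lemma rtg_lv_le {a b : B α h} (hab : Relation.ReflTransGen Step a b) : lv a ≤ lv b := by
  induction hab with
  | refl => exact le_rfl
  | tail _ hs ih =>
    have := hs.1
    omega

lemma rtg_eq_of_lv_le {a b : B α h} (hab : Relation.ReflTransGen Step a b)
    (hlv : lv b ≤ lv a) : a = b := by
  induction hab with
  | refl => rfl
  | @tail c d hac hs ih =>
    exfalso
    have h1 := hs.1
    have h2 : lv a ≤ lv c := by
      clear ih hlv hs h1
      induction hac with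
      | refl => exact le_rfl
      | tail _ hs ih => have := hs.1; omega
    omega

lemma rtg_pj_le {a b : B α h} (hab : Relation.ReflTransGen Step a b) : pj a ≤ pj b := by
  induction hab with
  | refl => exact le_rfl
  | tail _ hs ih => exact ih.trans hs.pj_le

noncomputable instance instB : PartialOrder (B α h) where
  le a b := Relation.ReflTransGen Step a b
  le_refl _ := .refl
  le_trans _ _ _ hab hbc := Relation.ReflTransGen.trans hab hbc
  le_antisymm a b hab hba := rtg_eq_of_lv_le hab (rtg_lv_le hba)

lemma le_def {a b : B α h} : a ≤ b ↔ Relation.ReflTransGen Step a b := Iff.rfl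

lemma lt_def {a b : B α h} : a < b ↔ Relation.ReflTransGen Step a b ∧ a ≠ b := by
  rw [lt_iff_le_and_ne]
  exact Iff.rfl

lemma lv_le_of_le {a b : B α h} (hab : a ≤ b) : lv a ≤ lv b := rtg_lv_le hab

lemma lv_lt_of_lt {a b : B α h} (hab : a < b) : lv a < lv b := by
  rw [lt_def] at hab
  rcases Nat.lt_or_ge (lv a) (lv b) with hl | hl
  · exact hl
  · exact absurd (rtg_eq_of_lv_le hab.1 hl) hab.2

lemma le_of_comparable_lv_le {a b : B α h} (hc : a ≤ b ∨ b ≤ a) (hlv : lv a ≤ lv b) : a ≤ b := by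
  rcases hc with hc | hc
  · exact hc
  · rw [rtg_eq_of_lv_le hc hlv]

section Ord2
variable {α : Type} [Fintype α] [PartialOrder α]

lemma exists_covby_right {x y : α} (hxy : x < y) : ∃ z, x ≤ z ∧ z ⋖ y := by
  obtain ⟨z, hz, hmax⟩ : ∃ z ∈ (univ.filter fun z => x ≤ z ∧ z < y),
      ∀ w ∈ (univ.filter fun z => x ≤ z ∧ z < y), ¬ z < w := by
    obtain ⟨z, hz⟩ := Finset.exists_maximal (s := univ.filter fun z => x ≤ z ∧ z < y)
      ⟨x, by simp [hxy]⟩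
    exact ⟨z, hz.1, fun w hw hzw => hzw.not_ge (hz.2 hw hzw.le)⟩
  simp only [mem_filter, mem_univ, true_and] at hz
  refine ⟨z, hz.1, hz.2, fun w hzw hwy => ?_⟩
  exact hmax w (by simp [hz.1.trans hzw.le, hwy]) hzw

lemma exists_covby_left {x y : α} (hxy : x < y) : ∃ z, x ⋖ z ∧ z ≤ y := by
  obtain ⟨z, hz, hmin⟩ : ∃ z ∈ (univ.filter fun z => x < z ∧ z ≤ y),
      ∀ w ∈ (univ.filter fun z => x < z ∧ z ≤ y), ¬ w < z := by
    obtain ⟨z, hz⟩ := Finset.exists_minimal (s := univ.filter fun z => x < z ∧ z ≤ y)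
      ⟨y, by simp [hxy]⟩
    exact ⟨z, hz.1, fun w hw hwz => hwz.not_ge (hz.2 hw hwz.le)⟩
  simp only [mem_filter, mem_univ, true_and] at hz
  refine ⟨z, ⟨hz.1, fun w hxw hwz => ?_⟩, hz.2⟩
  exact hmin w (by simp [hxw, hwz.le.trans hz.2]) hwz

lemma not_isMax_covby {x : α} (hx : ¬ IsMax x) : ∃ y, x ⋖ y := by
  rw [not_isMax_iff] at hx
  obtain ⟨y, hy⟩ := hx
  obtain ⟨z, hz, -⟩ := exists_covby_left hy
  exact ⟨z, hz⟩

lemma not_isMin_covby {x : α} (hx : ¬ IsMin x) : ∃ p, p ⋖ x := by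
  rw [not_isMin_iff] at hx
  obtain ⟨y, hy⟩ := hx
  obtain ⟨z, -, hz⟩ := exists_covby_right hy
  exact ⟨z, hz⟩

lemma le_rtg_covby : ∀ (n : ℕ) (x y : α), (univ.filter (· ≤ y)).card ≤ n → x ≤ y →
    Relation.ReflTransGen (· ⋖ ·) x y := by
  intro n
  induction n with
  | zero =>
    intro x y hn hxy
    exfalso
    have : y ∈ univ.filter (· ≤ y) := by simp
    have := Finset.card_pos.mpr ⟨y, this⟩
    omega
  | succ n ih =>
    intro x y hn hxy
    rcases eq_or_lt_of_le hxy with rfl | hlt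
    · exact .refl
    · obtain ⟨z, hxz, hzy⟩ := exists_covby_right hlt
      have hsub : (univ.filter (· ≤ z)) ⊂ (univ.filter (· ≤ y)) := by
        refine Finset.ssubset_iff_of_subset ?_ |>.mpr ⟨y, by simp, by simp [hzy.lt.not_ge]⟩
        intro w hw
        simp only [mem_filter, mem_univ, true_and] at hw ⊢
        exact hw.trans hzy.lt.le
      have hcard := Finset.card_lt_card hsub
      exact (ih x z (by omega) hxz).tail hzy

lemma le_iff_rtg_covby {x y : α} (hxy : x ≤ y) : Relation.ReflTransGen (· ⋖ ·) x y :=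
  le_rtg_covby _ x y le_rfl hxy

end Ord2

section Part3
variable {α : Type} [Fintype α] [PartialOrder α] {h : ℕ}

noncomputable def fB (hh : HasHeight α h) (x : α) : B α h := ⟨(x, ht x), f_mem hh x⟩

@[simp] lemma pj_fB (hh : HasHeight α h) (x : α) : pj (fB hh x) = x := rfl
@[simp] lemma lv_fB (hh : HasHeight α h) (x : α) : lv (fB hh x) = ht x := rfl

lemma fB_inj (hh : HasHeight α h) : Function.Injective (fB hh) := by
  intro x y hxy
  have : pj (fB hh x) = pj (fB hh y) := by rw [hxy]
  simpa using this

lemma climb (hh : HasHeight α h) :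
    ∀ (k : ℕ) (x : α) (i : ℕ) (hm : Mem h x i), i + k = ht x →
    Relation.ReflTransGen Step (⟨(x, i), hm⟩ : B α h) (fB hh x) := by
  intro k
  induction k with
  | zero =>
    intro x i hm hik
    have : (⟨(x, i), hm⟩ : B α h) = fB hh x := by
      apply Subtype.ext
      simp only [fB]
      exact Prod.ext rfl (by omega)
    rw [this]
  | succ k ih =>
    intro x i hm hik
    have hi : i < ht x := by omega
    have hm' := up_mem hh hm hi
    have hstep : Step (⟨(x, i), hm⟩ : B α h) ⟨(x, i+1), hm'⟩ := ⟨rfl, Or.inl rfl⟩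
    exact Relation.ReflTransGen.head hstep (ih x (i+1) hm' (by omega))

lemma fB_mono_covby (hh : HasHeight α h) {x y : α} (hxy : x ⋖ y) : fB hh x ≤ fB hh y := by
  have hlt : ht x < ht y := ht_lt hxy.lt
  have hm := cross_mem hh hxy
  have hstep : Step (fB hh x) (⟨(y, ht x + 1), hm⟩ : B α h) := ⟨rfl, Or.inr ⟨hxy, rfl⟩⟩
  exact Relation.ReflTransGen.head hstep (climb hh (ht y - (ht x + 1)) y (ht x + 1) hm (by omega))

lemma rtg_covby_fB (hh : HasHeight α h) {x y : α}
    (hr : Relation.ReflTransGen (· ⋖ ·) x y) : fB hh x ≤ fB hh y := by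
  induction hr with
  | refl => exact le_refl _
  | tail _ hs ih => exact le_trans ih (fB_mono_covby hh hs)

lemma fB_le_iff (hh : HasHeight α h) (x y : α) : x ≤ y ↔ fB hh x ≤ fB hh y := by
  constructor
  · intro hxy
    exact rtg_covby_fB hh (le_iff_rtg_covby hxy)
  · intro hxy
    have := rtg_pj_le hxy
    simpa using this

lemma exists_step_out (hh : HasHeight α h) (a : B α h) (hlt : lv a < h) :
    ∃ b, Step a b := by
  obtain ⟨⟨x, i⟩, hm⟩ := a
  have e1 : ht ((x, i).1) = ht x := rfl
  have e2 : lv (⟨(x, i), hm⟩ : B α h) = i := rfl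
  have e3 : i < h := hlt
  by_cases hi : i < ht x
  · exact ⟨⟨(x, i+1), up_mem hh hm hi⟩, rfl, Or.inl rfl⟩
  · push_neg at hi
    by_cases hmax : IsMax x
    · have hm' : Mem h x (i+1) := ⟨hlt, Or.inr (Or.inr ⟨by omega, hmax⟩)⟩
      exact ⟨⟨(x, i+1), hm'⟩, rfl, Or.inl rfl⟩
    · have hix : i = ht x := by
        rcases hm.2 with he | ⟨hl, -⟩ | ⟨-, hM⟩
        · exact he
        · omega
        · exact absurd hM hmax
      obtain ⟨y, hxy⟩ := not_isMax_covby hmax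
      have hm' : Mem h y (i+1) := by rw [hix]; exact cross_mem hh hxy
      exact ⟨⟨(y, i+1), hm'⟩, rfl, Or.inr ⟨hxy, hix⟩⟩

lemma exists_step_in (hh : HasHeight α h) (a : B α h) (hlt : 1 < lv a) :
    ∃ b, Step b a := by
  obtain ⟨⟨x, i⟩, hm⟩ := a
  have hi1 : 1 < i := hlt
  obtain ⟨j, rfl⟩ : ∃ j, i = j + 1 := ⟨i - 1, by omega⟩
  have e1 : ht ((x, j + 1).1) = ht x := rfl
  have e2 : lv (⟨(x, j + 1), hm⟩ : B α h) = j + 1 := rfl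
  have hxh := ht_le hh x
  rcases hm.2 with he | ⟨hl, q, hq, hqj⟩ | ⟨hl, hmax⟩
  · -- j + 1 = ht x
    have hmin : ¬ IsMin x := by
      intro hmin
      rw [ht_min hmin] at he
      omega
    obtain ⟨p, hp⟩ := not_isMin_covby hmin
    have hpx : ht p < ht x := ht_lt hp.lt
    by_cases hpj : ht p = j
    · refine ⟨fB hh p, ?_, Or.inr ⟨hp, ?_⟩⟩
      · show j + 1 = ht p + 1
        omega
      · simp
    · have hm' : Mem h x j := ⟨by omega, Or.inr (Or.inl ⟨by omega, p, hp, by omega⟩)⟩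
      exact ⟨⟨(x, j), hm'⟩, rfl, Or.inl rfl⟩
  · by_cases hqj : ht q = j
    · refine ⟨fB hh q, ?_, Or.inr ⟨hq, ?_⟩⟩
      · show j + 1 = ht q + 1
        omega
      · simp
    · have hm' : Mem h x j := ⟨by omega, Or.inr (Or.inl ⟨by omega, q, hq, by omega⟩)⟩
      exact ⟨⟨(x, j), hm'⟩, rfl, Or.inl rfl⟩
  · have hm' : Mem h x j := down_mem hm (by omega)
    exact ⟨⟨(x, j), hm'⟩, rfl, Or.inl rfl⟩

lemma chain_injOn_lv {c : Finset (B α h)} (hc : IsChain (· ≤ ·) (c : Set (B α h))) :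
    Set.InjOn lv (c : Set (B α h)) := by
  intro a ha b hb hab
  by_contra hne
  rcases hc ha hb hne with hle | hle
  · exact hne (rtg_eq_of_lv_le hle (le_of_eq hab.symm))
  · exact hne (rtg_eq_of_lv_le hle (le_of_eq hab)).symm

lemma chain_card_le {c : Finset (B α h)} (hc : IsChain (· ≤ ·) (c : Set (B α h))) :
    c.card ≤ h := by
  rw [← Finset.card_image_of_injOn (chain_injOn_lv hc)]
  have hsub : c.image lv ⊆ Finset.Icc 1 h := by
    intro k hk
    obtain ⟨a, ha, rfl⟩ := Finset.mem_image.mp hk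
    rw [Finset.mem_Icc]
    exact lv_bounds a
  calc (c.image lv).card ≤ (Finset.Icc 1 h).card := Finset.card_le_card hsub
    _ = h := by rw [Nat.card_Icc]; omega

lemma hasHeightB (hh : HasHeight α h) : HasHeight (B α h) h := by
  constructor
  · obtain ⟨c0, hc0, hcard⟩ := hh.1
    refine ⟨c0.image (fB hh), ?_, ?_⟩
    · rw [Finset.coe_image]
      exact hc0.image_of_map_rel _ _ _ (fun x y hxy => (fB_le_iff hh x y).mp hxy)
    · rw [Finset.card_image_of_injective _ (fB_inj hh), hcard]
  · exact fun c hc => chain_card_le hc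

lemma rtg_intermediate {a b : B α h} (hab : Relation.ReflTransGen Step a b) :
    ∀ k, lv a ≤ k → k ≤ lv b →
    ∃ z, Relation.ReflTransGen Step a z ∧ Relation.ReflTransGen Step z b ∧ lv z = k := by
  induction hab using Relation.ReflTransGen.head_induction_on with
  | refl =>
    intro k h1 h2
    exact ⟨b, .refl, .refl, by omega⟩
  | @head a c hstep hrest ih =>
    intro k h1 h2
    rcases eq_or_lt_of_le h1 with he | hlt
    · exact ⟨a, .refl, Relation.ReflTransGen.head hstep hrest, he⟩
    · have hc : lv c ≤ k := by
        have := hstep.1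
        omega
      obtain ⟨z, hz1, hz2, hz3⟩ := ih k hc h2
      exact ⟨z, Relation.ReflTransGen.head hstep hz1, hz2, hz3⟩

lemma comparable_le {c : Finset (B α h)} (hc : IsChain (· ≤ ·) (c : Set (B α h)))
    {a b : B α h} (ha : a ∈ c) (hb : b ∈ c) (hlv : lv a ≤ lv b) : a ≤ b := by
  by_cases hab : a = b
  · exact le_of_eq hab
  · exact le_of_comparable_lv_le (hc ha hb hab) hlv

lemma maxchain_card (hh : HasHeight α h) (x0 : α) {c : Finset (B α h)}
    (hc : IsMaxChainF c) : c.card = h := by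
  have hch := hc.1
  -- inserting a comparable new element is impossible
  have hins : ∀ z : B α h, z ∉ c → (∀ w ∈ c, w ≤ z ∨ z ≤ w) → False := by
    intro z hz hcomp
    have hchain : IsChain (· ≤ ·) ((insert z c : Finset (B α h)) : Set (B α h)) := by
      rw [Finset.coe_insert]
      exact hch.insert fun b hb _ => (hcomp b hb).symm
    have heq := hc.2 _ hchain (Finset.subset_insert _ _)
    refine hz ?_
    rw [heq]
    exact Finset.mem_insert_self z c
  -- c is nonempty
  have hne : c.Nonempty := by
    rw [Finset.nonempty_iff_ne_empty]
    intro hemp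
    subst hemp
    have hchain : IsChain (· ≤ ·) (({fB hh x0} : Finset (B α h)) : Set (B α h)) := by
      rw [Finset.coe_singleton]
      exact Set.subsingleton_singleton.isChain
    have := hc.2 _ hchain (Finset.empty_subset _)
    exact Finset.singleton_ne_empty _ this.symm
  obtain ⟨bM, hbM, hbMax⟩ := Finset.exists_max_image c lv hne
  obtain ⟨bm, hbm, hbMin⟩ := Finset.exists_min_image c lv hne
  have htop : ∀ a ∈ c, a ≤ bM := fun a ha => comparable_le hch ha hbM (hbMax a ha)
  have hbot : ∀ a ∈ c, bm ≤ a := fun a ha => comparable_le hch hbm ha (hbMin a ha)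
  -- top has level h
  have hlvM : lv bM = h := by
    rcases Nat.lt_or_ge (lv bM) h with hl | hl
    · exfalso
      obtain ⟨b', hb'⟩ := exists_step_out hh bM hl
      refine hins b' (fun hb'c => ?_) (fun w hw => Or.inl ?_)
      · have := hbMax b' hb'c
        have := hb'.1
        omega
      · exact le_trans (htop w hw) (Relation.ReflTransGen.single hb')
    · exact le_antisymm (lv_bounds bM).2 hl
  -- bottom has level 1
  have hlvm : lv bm = 1 := by
    rcases Nat.lt_or_ge 1 (lv bm) with hl | hl
    · exfalso
      obtain ⟨b', hb'⟩ := exists_step_in hh bm hl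
      refine hins b' (fun hb'c => ?_) (fun w hw => Or.inr ?_)
      · have := hbMin b' hb'c
        have := hb'.1
        omega
      · exact le_trans (Relation.ReflTransGen.single hb') (hbot w hw)
    · exact le_antisymm hl (lv_bounds bm).1
  -- all levels are attained
  have hall : ∀ k, 1 ≤ k → k ≤ h → ∃ a ∈ c, lv a = k := by
    intro k hk1 hkh
    by_contra hna
    push_neg at hna
    have hk1' : 1 < k := by
      rcases eq_or_lt_of_le hk1 with he | hl
      · exact absurd (hlvm.trans he) (hna bm hbm)
      · exact hl
    have hkh' : k < h := by
      rcases eq_or_lt_of_le hkh with he | hl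
      · exact absurd (hlvM.trans he.symm ▸ rfl : lv bM = k) (hna bM hbM)
      · exact hl
    obtain ⟨a, haA, haMax⟩ := Finset.exists_max_image (c.filter (fun a => lv a < k)) lv
      ⟨bm, Finset.mem_filter.mpr ⟨hbm, by omega⟩⟩
    obtain ⟨b, hbB, hbMin'⟩ := Finset.exists_min_image (c.filter (fun a => k < lv a)) lv
      ⟨bM, Finset.mem_filter.mpr ⟨hbM, by omega⟩⟩
    rw [Finset.mem_filter] at haA hbB
    have hab : a ≤ b := comparable_le hch haA.1 hbB.1 (by omega)
    obtain ⟨z, hz1, hz2, hzlv⟩ := rtg_intermediate hab k (by omega) (by omega)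
    refine hins z (fun hzc => hna z hzc hzlv) (fun w hw => ?_)
    rcases Nat.lt_trichotomy (lv w) k with hlw | hlw | hlw
    · have hwA : w ∈ c.filter (fun a => lv a < k) := Finset.mem_filter.mpr ⟨hw, hlw⟩
      have := haMax w hwA
      exact Or.inl (le_trans (comparable_le hch hw haA.1 this) hz1)
    · exact absurd hlw (hna w hw)
    · have hwB : w ∈ c.filter (fun a => k < lv a) := Finset.mem_filter.mpr ⟨hw, hlw⟩
      have := hbMin' w hwB
      exact Or.inr (le_trans hz2 (comparable_le hch hbB.1 hw this))
  -- conclude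
  have himg : c.image lv = Finset.Icc 1 h := by
    apply Finset.Subset.antisymm
    · intro k hk
      obtain ⟨a, ha, rfl⟩ := Finset.mem_image.mp hk
      rw [Finset.mem_Icc]
      exact lv_bounds a
    · intro k hk
      rw [Finset.mem_Icc] at hk
      obtain ⟨a, ha, hak⟩ := hall k hk.1 hk.2
      exact Finset.mem_image.mpr ⟨a, ha, hak⟩
  calc c.card = (c.image lv).card := (Finset.card_image_of_injOn (chain_injOn_lv hch)).symm
    _ = h := by rw [himg, Nat.card_Icc]; omega


lemma lt_of_step {a b : B α h} (hs : Step a b) : a < b := by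
  rw [lt_def]
  refine ⟨Relation.ReflTransGen.single hs, fun he => ?_⟩
  have := hs.1
  rw [he] at this
  omega

lemma covby_iff_step {a b : B α h} : a ⋖ b ↔ Step a b := by
  constructor
  · intro hab
    have hlt := hab.lt
    rw [lt_def] at hlt
    rcases Relation.ReflTransGen.cases_head hlt.1 with he | ⟨c, hac, hcb⟩
    · exact absurd he hlt.2
    · by_cases hcbe : c = b
      · rw [← hcbe]; exact hac
      · exfalso
        refine hab.2 (lt_of_step hac) ?_
        rw [lt_def]
        exact ⟨hcb, hcbe⟩
  · intro hs
    refine ⟨lt_of_step hs, fun c hac hcb => ?_⟩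
    have h1 := lv_lt_of_lt hac
    have h2 := lv_lt_of_lt hcb
    have h3 := hs.1
    omega

lemma adjB_iff {a b : B α h} :
    (SimpleGraph.hasse (B α h)).Adj a b ↔ Step a b ∨ Step b a := by
  rw [SimpleGraph.hasse_adj]
  constructor
  · rintro (hc | hc)
    · exact Or.inl (covby_iff_step.mp hc)
    · exact Or.inr (covby_iff_step.mp hc)
  · rintro (hc | hc)
    · exact Or.inl (covby_iff_step.mpr hc)
    · exact Or.inr (covby_iff_step.mpr hc)

lemma reach_up (hh : HasHeight α h) :
    ∀ (k : ℕ) (x : α) (i : ℕ) (hm : Mem h x i), i + k = ht x →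
    (SimpleGraph.hasse (B α h)).Reachable ⟨(x, i), hm⟩ (fB hh x) := by
  intro k
  induction k with
  | zero =>
    intro x i hm hik
    have : (⟨(x, i), hm⟩ : B α h) = fB hh x := by
      apply Subtype.ext
      simp only [fB]
      exact Prod.ext rfl (by omega)
    rw [this]
  | succ k ih =>
    intro x i hm hik
    have hi : i < ht x := by omega
    have hm' := up_mem hh hm hi
    have hstep : Step (⟨(x, i), hm⟩ : B α h) ⟨(x, i+1), hm'⟩ := ⟨rfl, Or.inl rfl⟩
    exact (SimpleGraph.Adj.reachable (adjB_iff.mpr (Or.inl hstep))).trans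
      (ih x (i+1) hm' (by omega))

lemma reach_down (hh : HasHeight α h) :
    ∀ (k : ℕ) (x : α) (hm : Mem h x (ht x + k)),
    (SimpleGraph.hasse (B α h)).Reachable ⟨(x, ht x + k), hm⟩ (fB hh x) := by
  intro k
  induction k with
  | zero =>
    intro x hm
    have : (⟨(x, ht x + 0), hm⟩ : B α h) = fB hh x := by
      apply Subtype.ext
      simp only [fB]
      exact Prod.ext rfl (by omega)
    rw [this]

  | succ k ih =>
    intro x hm
    have hm' : Mem h x (ht x + k) := down_mem hm (by omega)
    have hstep : Step (⟨(x, ht x + k), hm'⟩ : B α h) ⟨(x, ht x + (k+1)), hm⟩ :=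
      ⟨rfl, Or.inl rfl⟩
    exact (SimpleGraph.Adj.reachable (adjB_iff.mpr (Or.inr hstep))).trans (ih x hm')

lemma reach_to_f (hh : HasHeight α h) (a : B α h) :
    (SimpleGraph.hasse (B α h)).Reachable a (fB hh (pj a)) := by
  obtain ⟨⟨x, i⟩, hm⟩ := a
  show (SimpleGraph.hasse (B α h)).Reachable ⟨(x, i), hm⟩ (fB hh x)
  rcases le_or_gt i (ht x) with hle | hlt
  · exact reach_up hh (ht x - i) x i hm (by omega)
  · obtain ⟨k, hk⟩ : ∃ k, i = ht x + k := ⟨i - ht x, by omega⟩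
    subst hk
    exact reach_down hh k x hm

lemma reach_fB_covby (hh : HasHeight α h) {x y : α} (hxy : x ⋖ y) :
    (SimpleGraph.hasse (B α h)).Reachable (fB hh x) (fB hh y) := by
  have hm := cross_mem hh hxy
  have hstep : Step (fB hh x) (⟨(y, ht x + 1), hm⟩ : B α h) := ⟨rfl, Or.inr ⟨hxy, rfl⟩⟩
  exact (SimpleGraph.Adj.reachable (adjB_iff.mpr (Or.inl hstep))).trans
    (reach_to_f hh ⟨(y, ht x + 1), hm⟩)

lemma reach_fB (hh : HasHeight α h) {x y : α} (hr : (SimpleGraph.hasse α).Reachable x y) :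
    (SimpleGraph.hasse (B α h)).Reachable (fB hh x) (fB hh y) := by
  obtain ⟨p⟩ := hr
  induction p with
  | nil => exact SimpleGraph.Reachable.refl _
  | @cons u v w hadj q ih =>
    refine SimpleGraph.Reachable.trans ?_ ih
    rw [SimpleGraph.hasse_adj] at hadj
    rcases hadj with hc | hc
    · exact reach_fB_covby hh hc
    · exact (reach_fB_covby hh hc).symm

lemma connB (hh : HasHeight α h) (hconn : (SimpleGraph.hasse α).Connected) :
    (SimpleGraph.hasse (B α h)).Connected := by
  have hne := hconn.nonempty
  obtain ⟨x0⟩ := hne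
  haveI : Nonempty (B α h) := ⟨fB hh x0⟩
  refine SimpleGraph.Connected.mk (fun a b => ?_)
  exact ((reach_to_f hh a).trans (reach_fB hh (hconn.preconnected _ _))).trans
    (reach_to_f hh b).symm


lemma top_eq (hh : HasHeight α h) {x : α} {i : ℕ} (hm : Mem h x i)
    (hns : ¬ Mem h x (i+1)) : i = if IsMax x then h else ht x := by
  rcases Nat.lt_trichotomy i (ht x) with hlt | he | hgt
  · exact absurd (up_mem hh hm hlt) hns
  · by_cases hmax : IsMax x
    · rw [if_pos hmax]
      rcases eq_or_lt_of_le hm.1 with heq | hlt2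
      · exact heq
      · exact absurd ⟨hlt2, Or.inr (Or.inr ⟨by omega, hmax⟩)⟩ hns
    · rw [if_neg hmax]
      exact he
  · have hmax : IsMax x := by
      rcases hm.2 with he2 | ⟨hl, -⟩ | ⟨-, hM⟩
      · omega
      · omega
      · exact hM
    rw [if_pos hmax]
    rcases eq_or_lt_of_le hm.1 with heq | hlt2
    · exact heq
    · exact absurd ⟨hlt2, Or.inr (Or.inr ⟨by omega, hmax⟩)⟩ hns

lemma top_mem (hh : HasHeight α h) (x : α) :
    Mem h x (if IsMax x then h else ht x) := by
  by_cases hmax : IsMax x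
  · rw [if_pos hmax]
    rcases eq_or_lt_of_le (ht_le hh x) with heq | hlt
    · exact ⟨le_rfl, Or.inl heq.symm⟩
    · exact ⟨le_rfl, Or.inr (Or.inr ⟨hlt, hmax⟩)⟩
  · rw [if_neg hmax]
    exact f_mem hh x

lemma top_not_mem (x : α) : ¬ Mem h x ((if IsMax x then h else ht x) + 1) := by
  intro hm
  by_cases hmax : IsMax x
  · rw [if_pos hmax] at hm
    have := hm.1
    omega
  · rw [if_neg hmax] at hm
    rcases hm.2 with he | ⟨hl, -⟩ | ⟨-, hM⟩
    · omega
    · omega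
    · exact hmax hM

lemma edge_count (hh : HasHeight α h) (hta : (SimpleGraph.hasse α).IsTree) :
    (SimpleGraph.hasse (B α h)).edgeSet.ncard + 1 = Fintype.card (B α h) := by
  classical
  set SP : Finset (B α h × B α h) := Finset.univ.filter (fun p => Step p.1 p.2) with hSP
  set D : Finset (B α h) := Finset.univ.filter (fun a => Mem h (pj a) (lv a + 1)) with hD
  set CP : Finset (α × α) := Finset.univ.filter (fun p => p.1 ⋖ p.2) with hCP
  -- (1) edges of hasse B ↔ step pairs
  have h1 : (SimpleGraph.hasse (B α h)).edgeSet.ncard = SP.card := by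
    rw [ncard_edge_eq]
    refine (Finset.card_bij (fun p (_ : p ∈ SP) => s(p.1, p.2)) ?_ ?_ ?_).symm
    · intro p hp
      rw [hSP, Finset.mem_filter] at hp
      rw [SimpleGraph.mem_edgeFinset, SimpleGraph.mem_edgeSet]
      exact adjB_iff.mpr (Or.inl hp.2)
    · intro p hp q hq heq
      rw [hSP, Finset.mem_filter] at hp hq
      rw [Sym2.eq_iff] at heq
      rcases heq with ⟨e1, e2⟩ | ⟨e1, e2⟩
      · exact Prod.ext e1 e2
      · exfalso
        have l1 := hp.2.1
        have l2 := hq.2.1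
        rw [← e1, ← e2] at l2
        omega
    · intro e he
      revert he
      refine Sym2.inductionOn e ?_
      intro a b he
      rw [SimpleGraph.mem_edgeFinset, SimpleGraph.mem_edgeSet] at he
      rcases adjB_iff.mp he with hs | hs
      · exact ⟨(a, b), by rw [hSP, Finset.mem_filter]; exact ⟨Finset.mem_univ _, hs⟩, rfl⟩
      · exact ⟨(b, a), by rw [hSP, Finset.mem_filter]; exact ⟨Finset.mem_univ _, hs⟩,
          Sym2.eq_swap⟩
  -- (2) split into column and cross steps
  have h2 : (SP.filter (fun p => pj p.2 = pj p.1)).card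
      + (SP.filter (fun p => ¬ pj p.2 = pj p.1)).card = SP.card :=
    Finset.card_filter_add_card_filter_not _
  -- (3) column steps ↔ D
  have h3 : (SP.filter (fun p => pj p.2 = pj p.1)).card = D.card := by
    refine Finset.card_bij (fun p (_ : p ∈ SP.filter (fun p => pj p.2 = pj p.1)) => p.1)
      ?_ ?_ ?_
    · intro p hp
      rw [Finset.mem_filter, hSP, Finset.mem_filter] at hp
      obtain ⟨⟨-, hstep⟩, hcol⟩ := hp
      rw [hD, Finset.mem_filter]
      refine ⟨Finset.mem_univ _, ?_⟩
      have := memB p.2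
      rw [hcol, hstep.1] at this
      exact this
    · intro p hp q hq heq
      rw [Finset.mem_filter, hSP, Finset.mem_filter] at hp hq
      obtain ⟨⟨-, hsp⟩, hcp⟩ := hp
      obtain ⟨⟨-, hsq⟩, hcq⟩ := hq
      refine Prod.ext heq (Subtype.ext (Prod.ext ?_ ?_))
      · show pj p.2 = pj q.2
        rw [hcp, hcq, heq]
      · show lv p.2 = lv q.2
        rw [hsp.1, hsq.1, heq]
    · intro a ha
      rw [hD, Finset.mem_filter] at ha
      refine ⟨(a, ⟨(pj a, lv a + 1), ha.2⟩), ?_, rfl⟩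
      rw [Finset.mem_filter, hSP, Finset.mem_filter]
      exact ⟨⟨Finset.mem_univ _, rfl, Or.inl rfl⟩, rfl⟩
  -- (4) cross steps ↔ covering pairs of α
  have h4 : (SP.filter (fun p => ¬ pj p.2 = pj p.1)).card = CP.card := by
    refine Finset.card_bij
      (fun p (_ : p ∈ SP.filter (fun p => ¬ pj p.2 = pj p.1)) => (pj p.1, pj p.2)) ?_ ?_ ?_
    · intro p hp
      rw [Finset.mem_filter, hSP, Finset.mem_filter] at hp
      obtain ⟨⟨-, hstep⟩, hcol⟩ := hp
      rw [hCP, Finset.mem_filter]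
      rcases hstep.2 with he | ⟨hc, -⟩
      · exact absurd he hcol
      · exact ⟨Finset.mem_univ _, hc⟩
    · intro p hp q hq heq
      rw [Finset.mem_filter, hSP, Finset.mem_filter] at hp hq
      obtain ⟨⟨-, hsp⟩, hcp⟩ := hp
      obtain ⟨⟨-, hsq⟩, hcq⟩ := hq
      rw [Prod.mk.injEq] at heq
      have hp2 : lv p.1 = ht (pj p.1) := by
        rcases hsp.2 with he | ⟨-, hlv⟩
        · exact absurd he hcp
        · exact hlv
      have hq2 : lv q.1 = ht (pj q.1) := by
        rcases hsq.2 with he | ⟨-, hlv⟩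
        · exact absurd he hcq
        · exact hlv
      have e1 : p.1 = q.1 := by
        refine Subtype.ext (Prod.ext heq.1 ?_)
        show lv p.1 = lv q.1
        rw [hp2, hq2, heq.1]
      refine Prod.ext e1 (Subtype.ext (Prod.ext heq.2 ?_))
      show lv p.2 = lv q.2
      rw [hsp.1, hsq.1, e1]
    · intro q hq
      rw [hCP, Finset.mem_filter] at hq
      obtain ⟨-, hcov⟩ := hq
      refine ⟨(fB hh q.1, ⟨(q.2, ht q.1 + 1), cross_mem hh hcov⟩), ?_, rfl⟩
      rw [Finset.mem_filter, hSP, Finset.mem_filter]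
      refine ⟨⟨Finset.mem_univ _, rfl, Or.inr ⟨hcov, rfl⟩⟩, ?_⟩
      show ¬ (q.2 = q.1)
      exact hcov.ne'
  -- (5) covering pairs ↔ edges of hasse α
  have h5 : CP.card = (SimpleGraph.hasse α).edgeSet.ncard := by
    rw [ncard_edge_eq]
    refine Finset.card_bij (fun p (_ : p ∈ CP) => s(p.1, p.2)) ?_ ?_ ?_
    · intro p hp
      rw [hCP, Finset.mem_filter] at hp
      rw [SimpleGraph.mem_edgeFinset, SimpleGraph.mem_edgeSet, SimpleGraph.hasse_adj]
      exact Or.inl hp.2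
    · intro p hp q hq heq
      rw [hCP, Finset.mem_filter] at hp hq
      rw [Sym2.eq_iff] at heq
      rcases heq with ⟨e1, e2⟩ | ⟨e1, e2⟩
      · exact Prod.ext e1 e2
      · exfalso
        have l1 := hp.2.lt
        have l2 := hq.2.lt
        rw [← e1, ← e2] at l2
        exact absurd (l1.trans l2) (lt_irrefl _)
    · intro e he
      revert he
      refine Sym2.inductionOn e ?_
      intro a b he
      rw [SimpleGraph.mem_edgeFinset, SimpleGraph.mem_edgeSet, SimpleGraph.hasse_adj] at he
      rcases he with hs | hs
      · exact ⟨(a, b), by rw [hCP, Finset.mem_filter]; exact ⟨Finset.mem_univ _, hs⟩, rfl⟩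
      · exact ⟨(b, a), by rw [hCP, Finset.mem_filter]; exact ⟨Finset.mem_univ _, hs⟩,
          Sym2.eq_swap⟩
  -- (6) tree edge count of α
  have h6 : (SimpleGraph.hasse α).edgeSet.ncard + 1 = Fintype.card α := by
    rw [ncard_edge_eq]
    exact hta.card_edgeFinset
  -- (7) card of B = D.card + card α
  have h7 : Fintype.card (B α h) = D.card + Fintype.card α := by
    have hcompl : D.card + Dᶜ.card = Fintype.card (B α h) := Finset.card_add_card_compl _
    have hDc : Dᶜ.card = Fintype.card α := by
      rw [← Finset.card_univ]
      refine Finset.card_bij (fun a (_ : a ∈ Dᶜ) => pj a) ?_ ?_ ?_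
      · intro a _
        exact Finset.mem_univ _
      · intro a ha b hb heq
        rw [Finset.mem_compl, hD, Finset.mem_filter] at ha hb
        have ha' : ¬ Mem h (pj a) (lv a + 1) := fun hm => ha ⟨Finset.mem_univ _, hm⟩
        have hb' : ¬ Mem h (pj b) (lv b + 1) := fun hm => hb ⟨Finset.mem_univ _, hm⟩
        have e1 := top_eq hh (memB a) ha'
        have e2 := top_eq hh (memB b) hb'
        have heq' : pj a = pj b := heq
        refine Subtype.ext (Prod.ext heq' ?_)
        show lv a = lv b
        rw [e1, e2, heq']
      · intro x _
        refine ⟨⟨(x, if IsMax x then h else ht x), top_mem hh x⟩, ?_, rfl⟩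
        refine Finset.mem_compl.mpr ?_
        rw [hD]
        refine fun hmem => ?_
        revert hmem
        refine fun hmem => absurd (Finset.mem_filter.mp hmem) ?_
        rintro ⟨-, hm⟩
        exact top_not_mem x hm
    omega
  omega

end Part3

end Stmt3AuxB



/-- Every finite poset whose Hasse diagram is a tree is an induced subposet
(`a ≤ b ↔ f a ≤ f b`) of a finite *saturated* poset (every maximal chain has `h` elements)
of the same height whose Hasse diagram is also a tree. -/
theorem stmt_3 (α : Type) [Fintype α] [PartialOrder α] (h : ℕ)
    (hh : HasHeight α h) (htree : (SimpleGraph.hasse α).IsTree) :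
    ∃ (β : Type) (instP : PartialOrder β) (_instF : Fintype β),
      @HasHeight β instP.toPreorder h ∧
      (∀ c : Finset β, @IsMaxChainF β instP.toPreorder c → c.card = h) ∧
      (@SimpleGraph.hasse β instP.toPreorder).IsTree ∧
      ∃ f : α → β, Function.Injective f ∧
        ∀ a b : α, a ≤ b ↔ instP.le (f a) (f b) := by
  classical
  obtain ⟨x0⟩ := htree.isConnected.nonempty
  refine ⟨Stmt3AuxB.B α h, Stmt3AuxB.instB, inferInstance, ?_, ?_, ?_, ?_⟩
  · exact Stmt3AuxB.hasHeightB hh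
  · exact fun c hc => Stmt3AuxB.maxchain_card hh x0 hc
  · exact Stmt3AuxB.isTree_of_connected_card _ (Stmt3AuxB.connB hh htree.isConnected)
      (Stmt3AuxB.edge_count hh htree)
  · exact ⟨Stmt3AuxB.fB hh, Stmt3AuxB.fB_inj hh, fun a b => Stmt3AuxB.fB_le_iff hh a b⟩
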